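/- Let X be a finite set with a weight μ : X → [0,∞), let Y_1, …, Y_d be finite sets with lattice norms N_j on ℝ^{Y_j}, let K : X × Y_1 × ⋯ × Y_d → [0,∞) be a kernel with associated positive multilinear operator T, and suppose T saturates X. Let 1 ≤ q < ∞ with conjugate exponent q', and let A, B > 0. Assume: (i) for all nonnegative f_j ∈ ℝ^{Y_j}, ‖T(f_1,…,f_d)^{1/d}‖_{L^q(μ)} ≤ A (N_1(f_1)⋯N_d(f_d))^{1/d}; and (ii) for all nonnegative f_1,…,f_d there exist functions S_j : X × Y_j → [0,∞) such that K(x,y_1,…,y_d) ≤ S_1(x,y_1)⋯S_d(x,y_d) for all x, y_1, …, y_d, and ∏_{j=1}^d (Σ_{y_j∈Y_j} S_j(x,y_j) f_j(y_j)) ≤ B^d · T(f_1,…,f_d)(x) for all x ∈ X. Then for every M : X → [0,∞) with ‖M‖_{ℓ^{q'}(μ)} ≤ 1 there exist kernels g_j : X × Y_j → [0,∞) such that M(x)^d K(x,y_1,…,y_d) ≤ g_1(x,y_1)⋯g_d(x,y_d) for all x, y_1, …, y_d, and for every j and every nonnegative f ∈ ℝ^{Y_j}, Σ_{x∈X} μ(x)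 Σ_{y∈Y_j} g_j(x,y) f(y) ≤ A·B·N_j(f). -/

import Mathlib

set_option linter.unusedSectionVars false
set_option maxHeartbeats 1000000

namespace MultilinearDualityAux

variable {d : ℕ} {X : Type*} [Fintype X] {Y : Fin d → Type*} [∀ j, Fintype (Y j)]

/-- The bilinear pairing `L g f = ∑ j ∑ x μ x ∑ y g j x y * f j y`. -/
def Lp (μ : X → ℝ) (g : ∀ j, X → Y j → ℝ) (f : ∀ j, Y j → ℝ) : ℝ :=
  ∑ j, ∑ x, μ x * ∑ y, g j x y * f j y

lemma Lp_cont_f (μ : X → ℝ) (g : ∀ j, X → Y j → ℝ) :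
    Continuous fun f : ∀ j, Y j → ℝ => Lp μ g f := by
  refine continuous_finset_sum _ fun j _ => continuous_finset_sum _ fun x _ => ?_
  exact continuous_const.mul <| continuous_finset_sum _ fun y _ =>
    continuous_const.mul ((continuous_apply y).comp (continuous_apply j))

lemma Lp_cont_g (μ : X → ℝ) (f : ∀ j, Y j → ℝ) :
    Continuous fun g : ∀ j, X → Y j → ℝ => Lp μ g f := by
  refine continuous_finset_sum _ fun j _ => continuous_finset_sum _ fun x _ => ?_
  exact continuous_const.mul <| continuous_finset_sum _ fun y _ => by fun_prop

lemma Lp_add_smul_f (μ : X → ℝ) (g : ∀ j, X → Y j → ℝ) (a b : ℝ) (f₁ f₂ : ∀ j, Y j → ℝ) :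
    Lp μ g (a • f₁ + b • f₂) = a * Lp μ g f₁ + b * Lp μ g f₂ := by
  simp only [Lp, Finset.mul_sum]
  rw [← Finset.sum_add_distrib]
  refine Finset.sum_congr rfl fun j _ => ?_
  rw [← Finset.sum_add_distrib]
  refine Finset.sum_congr rfl fun x _ => ?_
  rw [← Finset.sum_add_distrib]
  refine Finset.sum_congr rfl fun y _ => ?_
  simp only [Pi.add_apply, Pi.smul_apply, smul_eq_mul]
  ring

lemma Lp_add_g (μ : X → ℝ) (g₁ g₂ : ∀ j, X → Y j → ℝ) (f : ∀ j, Y j → ℝ) :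
    Lp μ (fun j x y => g₁ j x y + g₂ j x y) f = Lp μ g₁ f + Lp μ g₂ f := by
  simp only [Lp]
  rw [← Finset.sum_add_distrib]
  refine Finset.sum_congr rfl fun j _ => ?_
  rw [← Finset.sum_add_distrib]
  refine Finset.sum_congr rfl fun x _ => ?_
  rw [← mul_add, ← Finset.sum_add_distrib]
  congr 1
  refine Finset.sum_congr rfl fun y _ => ?_
  ring

lemma Lp_smul_g (μ : X → ℝ) (c : ℝ) (g : ∀ j, X → Y j → ℝ) (f : ∀ j, Y j → ℝ) :
    Lp μ (fun j x y => c * g j x y) f = c * Lp μ g f := by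
  simp only [Lp, Finset.mul_sum]
  refine Finset.sum_congr rfl fun j _ => ?_
  refine Finset.sum_congr rfl fun x _ => ?_
  refine Finset.sum_congr rfl fun y _ => ?_
  ring

lemma Lp_zero_g (μ : X → ℝ) (f : ∀ j, Y j → ℝ) :
    Lp μ (fun _ _ _ => (0:ℝ)) f = 0 := by
  simp [Lp]

lemma Lp_sum_g {ι : Type*} [DecidableEq ι] (μ : X → ℝ) (u : Finset ι) (w : ι → ℝ)
    (gg : ι → ∀ j, X → Y j → ℝ) (f : ∀ j, Y j → ℝ) :
    Lp μ (fun j x y => ∑ i ∈ u, w i * gg i j x y) f = ∑ i ∈ u, w i * Lp μ (gg i) f := by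
  induction u using Finset.induction_on with
  | empty => simpa using Lp_zero_g μ f
  | insert _ _ hni ih =>
    rename_i a s
    rw [Finset.sum_insert hni]
    rw [show (fun j x y => ∑ i ∈ insert a s, w i * gg i j x y)
        = (fun j x y => w a * gg a j x y + ∑ i ∈ s, w i * gg i j x y) by
      funext j x y; rw [Finset.sum_insert hni]]
    rw [Lp_add_g, Lp_smul_g, ih]

end MultilinearDualityAux

namespace MultilinearDualityAux

section NormLemmas

variable {α : Type*} [Fintype α] [DecidableEq α]

omit [Fintype α] [DecidableEq α] in
lemma norm_zero' (N : (α → ℝ) → ℝ) (hsmul : ∀ (c : ℝ) f, N (c • f) = |c| * N f) :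
    N 0 = 0 := by
  have := hsmul 0 0
  simpa using this

omit [Fintype α] [DecidableEq α] in
lemma norm_sum_le (N : (α → ℝ) → ℝ)
    (hadd : ∀ f g, N (f + g) ≤ N f + N g)
    (hsmul : ∀ (c : ℝ) f, N (c • f) = |c| * N f)
    {ι : Type*} (s : Finset ι) (φ : ι → (α → ℝ)) :
    N (∑ i ∈ s, φ i) ≤ ∑ i ∈ s, N (φ i) := by
  classical
  induction s using Finset.induction_on with
  | empty => simp [norm_zero' N hsmul]
  | insert _ _ hni ih =>
    rename_i a s
    rw [Finset.sum_insert hni, Finset.sum_insert hni]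
    exact le_trans (hadd _ _) (by linarith)

lemma norm_continuous (N : (α → ℝ) → ℝ)
    (hadd : ∀ f g, N (f + g) ≤ N f + N g)
    (hsmul : ∀ (c : ℝ) f, N (c • f) = |c| * N f) :
    Continuous N := by
  classical
  set G : (α → ℝ) → ℝ := fun v => ∑ y, |v y| * N (Pi.single y (1:ℝ)) with hG
  have hGcont : Continuous G := by
    refine continuous_finset_sum _ fun y _ => ?_
    exact ((continuous_apply y).abs).mul continuous_const
  have hGbound : ∀ v, N v ≤ G v := by
    intro v
    have hv : v = ∑ y, v y • (Pi.single y (1:ℝ) : α → ℝ) := by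
      funext z
      simp [Finset.sum_apply, Pi.single_apply]
    calc N v = N (∑ y, v y • (Pi.single y (1:ℝ) : α → ℝ)) := by rw [← hv]
      _ ≤ ∑ y, N (v y • (Pi.single y (1:ℝ) : α → ℝ)) := norm_sum_le N hadd hsmul _ _
      _ = G v := by simp [hG, hsmul]
  have hsub : ∀ f g, |N f - N g| ≤ G (f - g) := by
    intro f g
    rw [abs_sub_le_iff]
    constructor
    · have h1 : N f ≤ N g + N (f - g) := by
        have := hadd g (f - g); simpa using this
      have := hGbound (f - g); linarith
    · have h1 : N g ≤ N f + N (g - f) := by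
        have := hadd f (g - f); simpa using this
      have h2 : N (g - f) = N (f - g) := by
        have : g - f = (-1 : ℝ) • (f - g) := by
          funext z; simp only [Pi.sub_apply, Pi.smul_apply, smul_eq_mul]; ring
        rw [this, hsmul]; simp
      have := hGbound (f - g); linarith
  rw [continuous_iff_continuousAt]
  intro f₀
  have hle : ∀ f, N f₀ - G (f - f₀) ≤ N f := by
    intro f; have := hsub f f₀; rw [abs_sub_le_iff] at this; linarith [this.2]
  have hge : ∀ f, N f ≤ N f₀ + G (f - f₀) := by
    intro f; have := hsub f f₀; rw [abs_sub_le_iff] at this; linarith [this.1]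
  have hG0 : G 0 = 0 := by simp [hG]
  have hcont1 : Continuous fun f : α → ℝ => N f₀ - G (f - f₀) :=
    continuous_const.sub (hGcont.comp (continuous_id.sub continuous_const))
  have hcont2 : Continuous fun f : α → ℝ => N f₀ + G (f - f₀) :=
    continuous_const.add (hGcont.comp (continuous_id.sub continuous_const))
  have t1 : Filter.Tendsto (fun f : α → ℝ => N f₀ - G (f - f₀)) (nhds f₀) (nhds (N f₀)) := by
    have := hcont1.continuousAt (x := f₀)
    simpa [ContinuousAt, hG0] using this
  have t2 : Filter.Tendsto (fun f : α → ℝ => N f₀ + G (f - f₀)) (nhds f₀) (nhds (N f₀)) := by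
    have := hcont2.continuousAt (x := f₀)
    simpa [ContinuousAt, hG0] using this
  exact tendsto_of_tendsto_of_tendsto_of_le_of_le t1 t2 (fun f => hle f) (fun f => hge f)

end NormLemmas

end MultilinearDualityAux

namespace MultilinearDualityAux

section Sets

variable {d : ℕ} {X : Type*} [Fintype X] {Y : Fin d → Type*} [∀ j, Fintype (Y j)]

/-- The unit-"ball" of test tuples. -/
def Bs (N : ∀ j, (Y j → ℝ) → ℝ) : Set (∀ j, Y j → ℝ) :=
  {f | (∀ j y, 0 ≤ f j y) ∧ ∑ j, N j (f j) ≤ 1}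

/-- The set of admissible factorizations. -/
def Cs (M : X → ℝ) (K : X → (∀ j, Y j) → ℝ) (dd : ℕ) : Set (∀ j, X → Y j → ℝ) :=
  {g | (∀ j x y, 0 ≤ g j x y) ∧ ∀ x (y : ∀ j, Y j), M x ^ dd * K x y ≤ ∏ j, g j x (y j)}

lemma zero_mem_Bs (N : ∀ j, (Y j → ℝ) → ℝ)
    (hsmul : ∀ j (c : ℝ) f, N j (c • f) = |c| * N j f) : (0 : ∀ j, Y j → ℝ) ∈ Bs N := by
  constructor
  · intro j y; simp
  · have h0 : ∀ j : Fin d, N j (0 : Y j → ℝ) = 0 := fun j => norm_zero' (N j) (hsmul j)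
    simp [h0]

lemma convex_Bs (N : ∀ j, (Y j → ℝ) → ℝ)
    (hadd : ∀ j f g, N j (f + g) ≤ N j f + N j g)
    (hsmul : ∀ j (c : ℝ) f, N j (c • f) = |c| * N j f) : Convex ℝ (Bs N) := by
  rintro f ⟨hf0, hf1⟩ g ⟨hg0, hg1⟩ a b ha hb hab
  constructor
  · intro j y
    have := hf0 j y; have := hg0 j y
    simp only [Pi.add_apply, Pi.smul_apply, smul_eq_mul]
    positivity
  · have hj : ∀ j : Fin d, N j ((a • f + b • g) j) ≤ a * N j (f j) + b * N j (g j) := by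
      intro j
      have h1 : (a • f + b • g) j = a • (f j) + b • (g j) := by
        funext y; simp [Pi.add_apply, Pi.smul_apply]
      rw [h1]
      refine le_trans (hadd j _ _) ?_
      rw [hsmul j a (f j), hsmul j b (g j), abs_of_nonneg ha, abs_of_nonneg hb]
    calc ∑ j, N j ((a • f + b • g) j) ≤ ∑ j, (a * N j (f j) + b * N j (g j)) :=
          Finset.sum_le_sum fun j _ => hj j
      _ = a * ∑ j, N j (f j) + b * ∑ j, N j (g j) := by
          rw [Finset.sum_add_distrib, Finset.mul_sum, Finset.mul_sum]
      _ ≤ a * 1 + b * 1 := by gcongr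
      _ = 1 := by rw [mul_one, mul_one, hab]

lemma isClosed_Bs (N : ∀ j, (Y j → ℝ) → ℝ)
    (hadd : ∀ j f g, N j (f + g) ≤ N j f + N j g)
    (hsmul : ∀ j (c : ℝ) f, N j (c • f) = |c| * N j f) : IsClosed (Bs N) := by
  classical
  have h1 : IsClosed {f : ∀ j, Y j → ℝ | ∀ j y, 0 ≤ f j y} := by
    have : {f : ∀ j, Y j → ℝ | ∀ j y, 0 ≤ f j y}
        = ⋂ j, ⋂ y, {f : ∀ j, Y j → ℝ | 0 ≤ f j y} := by
      ext f; simp [Set.mem_iInter]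
    rw [this]
    exact isClosed_iInter fun j => isClosed_iInter fun y =>
      isClosed_le continuous_const ((continuous_apply y).comp (continuous_apply j))
  have h2 : IsClosed {f : ∀ j, Y j → ℝ | ∑ j, N j (f j) ≤ 1} := by
    refine isClosed_le ?_ continuous_const
    exact continuous_finset_sum _ fun j _ =>
      (norm_continuous (N j) (hadd j) (hsmul j)).comp (continuous_apply j)
  exact h1.inter h2

lemma single_pos (N : (β → ℝ) → ℝ) [Fintype β] [DecidableEq β]
    (hnn : ∀ f, 0 ≤ N f) (hdef : ∀ f, N f = 0 → f = 0) (y : β) :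
    0 < N (Pi.single y (1:ℝ)) := by
  rcases lt_or_eq_of_le (hnn (Pi.single y (1:ℝ))) with h | h
  · exact h
  · exfalso
    have := hdef _ h.symm
    have := congrFun this y
    simp at this

lemma isCompact_Bs (N : ∀ j, (Y j → ℝ) → ℝ)
    (hnn : ∀ j f, 0 ≤ N j f)
    (hadd : ∀ j f g, N j (f + g) ≤ N j f + N j g)
    (hsmul : ∀ j (c : ℝ) f, N j (c • f) = |c| * N j f)
    (hdef : ∀ j f, N j f = 0 → f = 0)
    (hlat : ∀ j f g, (∀ y, |f y| ≤ |g y|) → N j f ≤ N j g) : IsCompact (Bs N) := by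
  classical
  set Box : Set (∀ j, Y j → ℝ) :=
    Set.pi Set.univ fun j => Set.pi Set.univ fun y => Set.Icc 0 (N j (Pi.single y (1:ℝ)))⁻¹
    with hBox
  have hBoxCompact : IsCompact Box :=
    isCompact_univ_pi fun j => isCompact_univ_pi fun y => isCompact_Icc
  refine IsCompact.of_isClosed_subset hBoxCompact (isClosed_Bs N hadd hsmul) ?_
  rintro f ⟨hf0, hf1⟩
  intro j _
  intro y _
  have hNj1 : N j (f j) ≤ 1 := by
    refine le_trans (Finset.single_le_sum (f := fun j => N j (f j))
      (fun j _ => hnn j (f j)) (Finset.mem_univ j)) hf1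
  have hkey : f j y * N j (Pi.single y (1:ℝ)) ≤ 1 := by
    have h1 : N j (f j y • (Pi.single y (1:ℝ) : Y j → ℝ)) ≤ N j (f j) := by
      refine hlat j _ _ fun y' => ?_
      by_cases h : y' = y
      · subst h; simp
      · simp [Pi.single_apply, h]
    rw [hsmul j, abs_of_nonneg (hf0 j y)] at h1
    exact le_trans h1 hNj1
  have hpos := single_pos (N j) (hnn j) (hdef j) y
  constructor
  · exact hf0 j y
  · rw [← one_div]
    rw [le_div_iff₀ hpos]
    exact hkey

lemma prod_convex_aux (hd : 1 ≤ d) (a b : Fin d → ℝ) (ha : ∀ j, 0 ≤ a j) (hb : ∀ j, 0 ≤ b j)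
    (c : ℝ) (hc : 0 ≤ c) (hca : c ≤ ∏ j, a j) (hcb : c ≤ ∏ j, b j)
    (s t : ℝ) (hs : 0 ≤ s) (ht : 0 ≤ t) (hst : s + t = 1) :
    c ≤ ∏ j, (s * a j + t * b j) := by
  rcases eq_or_lt_of_le hc with h0 | h0
  · exact le_trans h0.symm.le (Finset.prod_nonneg fun j _ =>
      add_nonneg (mul_nonneg hs (ha j)) (mul_nonneg ht (hb j)))
  · have hapos : ∀ j, 0 < a j := by
      intro j
      rcases eq_or_lt_of_le (ha j) with h | h
      · exfalso
        have : ∏ k, a k = 0 := Finset.prod_eq_zero (Finset.mem_univ j) h.symm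
        rw [this] at hca; linarith
      · exact h
    have hbpos : ∀ j, 0 < b j := by
      intro j
      rcases eq_or_lt_of_le (hb j) with h | h
      · exfalso
        have : ∏ k, b k = 0 := Finset.prod_eq_zero (Finset.mem_univ j) h.symm
        rw [this] at hcb; linarith
      · exact h
    calc c = c ^ s * c ^ t := by
          rw [← Real.rpow_add h0, hst, Real.rpow_one]
      _ ≤ (∏ j, a j) ^ s * (∏ j, b j) ^ t := by
          have h1 : c ^ s ≤ (∏ j, a j) ^ s := Real.rpow_le_rpow hc hca hs
          have h2 : c ^ t ≤ (∏ j, b j) ^ t := Real.rpow_le_rpow hc hcb ht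
          exact mul_le_mul h1 h2 (Real.rpow_nonneg hc t) (Real.rpow_nonneg
            (Finset.prod_nonneg fun j _ => ha j) s)
      _ = ∏ j, (a j ^ s * b j ^ t) := by
          rw [Finset.prod_mul_distrib,
            Real.finset_prod_rpow _ _ (fun j _ => ha j) s,
            Real.finset_prod_rpow _ _ (fun j _ => hb j) t]
      _ ≤ ∏ j, (s * a j + t * b j) := by
          refine Finset.prod_le_prod (fun j _ =>
            mul_nonneg (Real.rpow_nonneg (ha j) s) (Real.rpow_nonneg (hb j) t)) fun j _ => ?_
          exact Real.geom_mean_le_arith_mean2_weighted hs ht (ha j) (hb j) hst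

lemma convex_Cs (M : X → ℝ) (K : X → (∀ j, Y j) → ℝ) (hd : 1 ≤ d)
    (hM0 : ∀ x, 0 ≤ M x) (hK : ∀ x y, 0 ≤ K x y) : Convex ℝ (Cs M K d) := by
  rintro g₁ ⟨hg₁0, hg₁⟩ g₂ ⟨hg₂0, hg₂⟩ a b ha hb hab
  constructor
  · intro j x y
    simp only [Pi.add_apply, Pi.smul_apply, smul_eq_mul]
    exact add_nonneg (mul_nonneg ha (hg₁0 j x y)) (mul_nonneg hb (hg₂0 j x y))
  · intro x y
    have h := prod_convex_aux hd (fun j => g₁ j x (y j)) (fun j => g₂ j x (y j))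
      (fun j => hg₁0 j x (y j)) (fun j => hg₂0 j x (y j))
      (M x ^ d * K x y) (mul_nonneg (pow_nonneg (hM0 x) d) (hK x y)) (hg₁ x y) (hg₂ x y)
      a b ha hb hab
    refine le_trans h (le_of_eq ?_)
    refine Finset.prod_congr rfl fun j _ => ?_
    simp [Pi.add_apply, Pi.smul_apply]

lemma isClosed_Cs (M : X → ℝ) (K : X → (∀ j, Y j) → ℝ) (dd : ℕ) : IsClosed (Cs M K dd) := by
  have h1 : IsClosed {g : ∀ j, X → Y j → ℝ | ∀ j x y, 0 ≤ g j x y} := by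
    have : {g : ∀ j, X → Y j → ℝ | ∀ j x y, 0 ≤ g j x y}
        = ⋂ j, ⋂ x, ⋂ y, {g : ∀ j, X → Y j → ℝ | 0 ≤ g j x y} := by
      ext g; simp [Set.mem_iInter]
    rw [this]
    exact isClosed_iInter fun j => isClosed_iInter fun x => isClosed_iInter fun y =>
      isClosed_le continuous_const
        ((continuous_apply y).comp ((continuous_apply x).comp (continuous_apply j)))
  have h2 : IsClosed {g : ∀ j, X → Y j → ℝ |
      ∀ x (y : ∀ j, Y j), M x ^ dd * K x y ≤ ∏ j, g j x (y j)} := by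
    have : {g : ∀ j, X → Y j → ℝ | ∀ x (y : ∀ j, Y j), M x ^ dd * K x y ≤ ∏ j, g j x (y j)}
        = ⋂ x, ⋂ y : ∀ j, Y j, {g : ∀ j, X → Y j → ℝ | M x ^ dd * K x y ≤ ∏ j, g j x (y j)} := by
      ext g; simp [Set.mem_iInter]
    rw [this]
    refine isClosed_iInter fun x => isClosed_iInter fun y => isClosed_le continuous_const ?_
    exact continuous_finset_prod _ fun j _ =>
      (continuous_apply (y j)).comp ((continuous_apply x).comp (continuous_apply j))
  exact h1.inter h2

end Sets

end MultilinearDualityAux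

namespace MultilinearDualityAux

lemma holder_mu {X : Type*} [Fintype X] (μ M v : X → ℝ) (q : ℝ)
    (hμ : ∀ x, 0 ≤ μ x) (hM0 : ∀ x, 0 ≤ M x) (hv : ∀ x, 0 ≤ v x) (hq : 1 ≤ q)
    (hM1 : q = 1 → ∀ x, M x ≤ 1)
    (hMq : 1 < q → (∑ x, μ x * M x ^ (q / (q - 1))) ^ ((q - 1) / q) ≤ 1) :
    ∑ x, μ x * (M x * v x) ≤ (∑ x, μ x * v x ^ q) ^ (1 / q) := by
  rcases eq_or_lt_of_le hq with h1 | h1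
  · -- q = 1
    have hM := hM1 h1.symm
    have : ∑ x, μ x * (M x * v x) ≤ ∑ x, μ x * v x := by
      refine Finset.sum_le_sum fun x _ => ?_
      have : M x * v x ≤ v x := by
        nlinarith [hM0 x, hv x, hM x]
      exact mul_le_mul_of_nonneg_left this (hμ x)
    rw [← h1]
    simpa [Real.rpow_one] using this
  · -- 1 < q
    set p : ℝ := q / (q - 1) with hp
    have hqp : q.HolderConjugate p := (Real.holderConjugate_iff_eq_conjExponent h1).2 rfl
    have hpq : p.HolderConjugate q := hqp.symm
    have hinv : 1 / p + 1 / q = 1 := by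
      rw [one_div, one_div, add_comm]
      exact hqp.inv_add_inv_eq_one
    have hp0 : p ≠ 0 := hpq.pos.ne'
    have key := Real.inner_le_Lp_mul_Lq_of_nonneg Finset.univ hpq
      (f := fun x => μ x ^ (1/p) * M x) (g := fun x => μ x ^ (1/q) * v x)
      (fun x _ => mul_nonneg (Real.rpow_nonneg (hμ x) _) (hM0 x))
      (fun x _ => mul_nonneg (Real.rpow_nonneg (hμ x) _) (hv x))
    have e1 : ∀ x : X, (μ x ^ (1/p) * M x) * (μ x ^ (1/q) * v x) = μ x * (M x * v x) := by
      intro x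
      have : μ x ^ (1/p) * μ x ^ (1/q) = μ x := by
        rw [← Real.rpow_add' (hμ x) (by rw [hinv]; norm_num), hinv, Real.rpow_one]
      calc (μ x ^ (1/p) * M x) * (μ x ^ (1/q) * v x)
          = (μ x ^ (1/p) * μ x ^ (1/q)) * (M x * v x) := by ring
        _ = μ x * (M x * v x) := by rw [this]
    have e2 : ∀ x : X, (μ x ^ (1/p) * M x) ^ p = μ x * M x ^ p := by
      intro x
      rw [Real.mul_rpow (Real.rpow_nonneg (hμ x) _) (hM0 x),
        ← Real.rpow_mul (hμ x), one_div_mul_cancel hp0, Real.rpow_one]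
    have e3 : ∀ x : X, (μ x ^ (1/q) * v x) ^ q = μ x * v x ^ q := by
      intro x
      rw [Real.mul_rpow (Real.rpow_nonneg (hμ x) _) (hv x),
        ← Real.rpow_mul (hμ x), one_div_mul_cancel (by positivity : q ≠ 0), Real.rpow_one]
    rw [Finset.sum_congr rfl (fun x _ => e1 x)] at key
    rw [Finset.sum_congr rfl (fun x _ => e2 x), Finset.sum_congr rfl (fun x _ => e3 x)] at key
    have hfac : (∑ x, μ x * M x ^ p) ^ (1/p) ≤ 1 := by
      have := hMq h1
      have hexp : (1:ℝ)/p = (q-1)/q := by rw [hp, one_div_div]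
      rw [hexp]
      exact this
    refine le_trans key ?_
    have h2nn : 0 ≤ (∑ x, μ x * v x ^ q) ^ (1/q) :=
      Real.rpow_nonneg (Finset.sum_nonneg fun x _ =>
        mul_nonneg (hμ x) (Real.rpow_nonneg (hv x) q)) _
    nlinarith [hfac, h2nn, Real.rpow_nonneg (Finset.sum_nonneg (fun x _ =>
      mul_nonneg (hμ x) (Real.rpow_nonneg (hM0 x) p)) : (0:ℝ) ≤ ∑ x, μ x * M x ^ p) (1/p)]

end MultilinearDualityAux

namespace MultilinearDualityAux

variable {d : ℕ} {X : Type*} [Fintype X] {Y : Fin d → Type*} [∀ j, Fintype (Y j)]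

theorem minimax (μ : X → ℝ) (𝒞 : Set (∀ j, X → Y j → ℝ)) (ℬ : Set (∀ j, Y j → ℝ))
    (h𝒞conv : Convex ℝ 𝒞) (h𝒞ne : 𝒞.Nonempty)
    (hℬcomp : IsCompact ℬ) (hℬconv : Convex ℝ ℬ)
    (c : ℝ) (hval : ∀ f ∈ ℬ, ∃ g ∈ 𝒞, Lp μ g f < c) :
    ∃ g ∈ 𝒞, ∀ f ∈ ℬ, Lp μ g f ≤ c := by
  classical
  by_contra hcon
  push_neg at hcon
  -- hcon : ∀ g ∈ 𝒞, ∃ f ∈ ℬ, c < Lp μ g f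
  have hcon' : ∀ g ∈ 𝒞, ∃ f ∈ ℬ, c < Lp μ g f := by
    intro g hg
    obtain ⟨f, hf1, hf2⟩ := hcon g hg
    exact ⟨f, hf1, hf2⟩
  obtain ⟨g₀, hg₀⟩ := h𝒞ne
  obtain ⟨f₀, hf₀, _⟩ := hcon' g₀ hg₀
  -- the family of "bad" sets
  set Z : 𝒞 → Set (∀ j, Y j → ℝ) := fun gi => {f | c ≤ Lp μ gi.1 f} with hZ
  have hZclosed : ∀ gi, IsClosed (Z gi) := fun gi =>
    isClosed_le continuous_const (Lp_cont_f μ gi.1)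
  have hFIP : (ℬ ∩ ⋂ gi, Z gi).Nonempty := by
    rw [Set.nonempty_iff_ne_empty]
    intro hemp
    obtain ⟨u, hu⟩ := hℬcomp.elim_finite_subfamily_closed Z hZclosed hemp
    -- separation in the finite-dimensional space indexed by `u`
    set φ : (∀ j, Y j → ℝ) → ({i : 𝒞 // i ∈ u} → ℝ) := fun f i => Lp μ i.1.1 f with hφ
    have hφcont : Continuous φ := continuous_pi fun i => Lp_cont_f μ i.1.1
    set Q : Set ({i : 𝒞 // i ∈ u} → ℝ) := φ '' ℬ with hQ
    set R : Set ({i : 𝒞 // i ∈ u} → ℝ) := {z | ∀ i, c ≤ z i} with hR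
    have hQcomp : IsCompact Q := hℬcomp.image hφcont
    have hQconv : Convex ℝ Q := by
      rintro _ ⟨f₁, hf₁, rfl⟩ _ ⟨f₂, hf₂, rfl⟩ a b ha hb hab
      refine ⟨a • f₁ + b • f₂, hℬconv hf₁ hf₂ ha hb hab, ?_⟩
      funext i
      simp only [hφ, Pi.add_apply, Pi.smul_apply, smul_eq_mul]
      rw [Lp_add_smul_f]
    have hRconv : Convex ℝ R := by
      rintro z₁ hz₁ z₂ hz₂ a b ha hb hab
      intro i
      have h₁ : c ≤ z₁ i := hz₁ i
      have h₂ : c ≤ z₂ i := hz₂ i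
      show c ≤ (a • z₁ + b • z₂) i
      simp only [Pi.add_apply, Pi.smul_apply, smul_eq_mul]
      calc c = a * c + b * c := by rw [← add_mul, hab, one_mul]
        _ ≤ a * z₁ i + b * z₂ i :=
            add_le_add (mul_le_mul_of_nonneg_left h₁ ha) (mul_le_mul_of_nonneg_left h₂ hb)
    have hRclosed : IsClosed R := by
      have : R = ⋂ i, {z : {i : 𝒞 // i ∈ u} → ℝ | c ≤ z i} := by ext z; simp [hR, Set.mem_iInter]
      rw [this]
      exact isClosed_iInter fun i => isClosed_le continuous_const (continuous_apply i)
    have hdisj : Disjoint Q R := by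
      rw [Set.disjoint_left]
      rintro _ ⟨f, hfB, rfl⟩ hzR
      have hmem : f ∈ ℬ ∩ ⋂ i ∈ u, Z i :=
        ⟨hfB, Set.mem_iInter₂.mpr fun i hi => hzR ⟨i, hi⟩⟩
      rw [hu] at hmem
      exact hmem
    obtain ⟨l, u', v', hQu, huv, hRv⟩ :=
      geometric_hahn_banach_compact_closed hQconv hQcomp hRconv hRclosed hdisj
    set lam : {i : 𝒞 // i ∈ u} → ℝ :=
      fun i => l (Pi.single i (1:ℝ) : {i : 𝒞 // i ∈ u} → ℝ) with hlam
    have hlrep : ∀ z : {i : 𝒞 // i ∈ u} → ℝ, l z = ∑ i, z i * lam i := by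
      intro z
      have hz : z = ∑ i, Pi.single i (z i) := (Finset.univ_sum_single z).symm
      conv_lhs => rw [hz]
      rw [map_sum]
      refine Finset.sum_congr rfl fun i _ => ?_
      have : (Pi.single i (z i) : {i : 𝒞 // i ∈ u} → ℝ)
          = z i • (Pi.single i (1:ℝ) : {i : 𝒞 // i ∈ u} → ℝ) := by
        funext k
        by_cases hk : k = i
        · subst hk; simp
        · simp [Pi.single_apply, hk]
      rw [this, map_smul]
      simp [hlam, smul_eq_mul, mul_comm]
    have hconstc : (fun _ => c : {i : 𝒞 // i ∈ u} → ℝ) ∈ R := fun i => le_refl c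
    have hlam0 : ∀ i, 0 ≤ lam i := by
      by_contra hneg
      push_neg at hneg
      obtain ⟨i, hi⟩ := hneg
      set C0 : ℝ := ∑ k, c * lam k with hC0
      set Rb : ℝ := max 0 ((C0 - v') / (-lam i) + 1) with hRb
      have hRb0 : 0 ≤ Rb := le_max_left _ _
      set z : {i : 𝒞 // i ∈ u} → ℝ := fun k => c + (if k = i then Rb else 0) with hz
      have hzR : z ∈ R := by
        intro k
        simp only [hz]
        split
        · linarith
        · linarith
      have hlz : l z = C0 + Rb * lam i := by
        rw [hlrep z]
        have : ∀ k, z k * lam k = c * lam k + (if k = i then Rb * lam k else 0) := by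
          intro k
          simp only [hz]
          split <;> ring
        rw [Finset.sum_congr rfl fun k _ => this k, Finset.sum_add_distrib,
          Finset.sum_ite_eq' Finset.univ i (fun k => Rb * lam k)]
        simp [hC0]
      have h1 : v' < C0 + Rb * lam i := by rw [← hlz]; exact hRv z hzR
      have h2 : (C0 - v') / (-lam i) < Rb :=
        lt_of_lt_of_le (lt_add_one _) (le_max_right _ _)
      have h3 : C0 - v' < Rb * (-lam i) := (div_lt_iff₀ (by linarith)).mp h2
      linarith
    have hwpos : 0 < ∑ i, lam i := by
      rcases eq_or_lt_of_le (Finset.sum_nonneg fun i _ => hlam0 i) with h0 | h0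
      · exfalso
        have hall0 : ∀ i ∈ Finset.univ, lam i = 0 :=
          (Finset.sum_eq_zero_iff_of_nonneg fun i _ => hlam0 i).mp h0.symm
        have hl0 : ∀ z : {i : 𝒞 // i ∈ u} → ℝ, l z = 0 := by
          intro z
          rw [hlrep z]
          exact Finset.sum_eq_zero fun i _ => by rw [hall0 i (Finset.mem_univ i), mul_zero]
        have hq0 : l (φ f₀) < u' := hQu _ ⟨f₀, hf₀, rfl⟩
        have hr0 : v' < l (fun _ => c) := hRv _ hconstc
        rw [hl0] at hq0
        rw [hl0] at hr0
        linarith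
      · exact h0
    set w : ℝ := ∑ i, lam i with hw
    set gbar : ∀ j, X → Y j → ℝ := fun j x y => ∑ i, (lam i / w) * (i.1.1 j x y) with hgbar
    have hgbar𝒞 : gbar ∈ 𝒞 := by
      have hmem := h𝒞conv.sum_mem (t := Finset.univ)
        (fun i _ => div_nonneg (hlam0 i) hwpos.le)
        (by rw [← Finset.sum_div, ← hw, div_self hwpos.ne'])
        (fun i (_ : i ∈ Finset.univ) => (i.1.2 : i.1.1 ∈ 𝒞))
      have : (∑ i, (lam i / w) • i.1.1) = gbar := by
        funext j x y
        simp [hgbar, Finset.sum_apply, Pi.smul_apply, smul_eq_mul]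
      rwa [this] at hmem
    obtain ⟨f', hf'B, hf'c⟩ := hcon' gbar hgbar𝒞
    have hcomp : Lp μ gbar f' = l (φ f') / w := by
      rw [hgbar, Lp_sum_g, hlrep (φ f')]
      rw [Finset.sum_div]
      refine Finset.sum_congr rfl fun i _ => ?_
      simp only [hφ]
      ring
    have hlt1 : l (φ f') < u' := hQu _ ⟨f', hf'B, rfl⟩
    have hlt2 : v' < l (fun _ => c) := hRv _ hconstc
    have hlc : l (fun _ => c : {i : 𝒞 // i ∈ u} → ℝ) = c * w := by
      rw [hlrep]
      rw [hw, Finset.mul_sum]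
    have : Lp μ gbar f' < c := by
      rw [hcomp, div_lt_iff₀ hwpos]
      rw [hlc] at hlt2
      linarith
    linarith
  obtain ⟨fstar, hfsB, hfsZ⟩ := hFIP
  obtain ⟨g, hg𝒞, hgval⟩ := hval fstar hfsB
  have : c ≤ Lp μ g fstar := by
    have := Set.mem_iInter.mp hfsZ ⟨g, hg𝒞⟩
    exact this
  linarith


theorem construct_step
    (hd : 1 ≤ d) (μ : X → ℝ) (hμ : ∀ x, 0 ≤ μ x)
    (N : ∀ j, (Y j → ℝ) → ℝ)
    (hN_nonneg : ∀ j f, 0 ≤ N j f)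
    (hN_add : ∀ j f g, N j (f + g) ≤ N j f + N j g)
    (hN_smul : ∀ j (c : ℝ) f, N j (c • f) = |c| * N j f)
    (K : X → (∀ j, Y j) → ℝ) (hK : ∀ x y, 0 ≤ K x y)
    (q : ℝ) (hq : 1 ≤ q)
    (A B : ℝ) (hA : 0 < A) (hB : 0 < B)
    (hmain : ∀ f : ∀ j, Y j → ℝ, (∀ j y, 0 ≤ f j y) →
      (∑ x, μ x * (∑ y : ∀ j, Y j, K x y * ∏ j, f j (y j)) ^ (q / d)) ^ (1 / q)
        ≤ A * (∏ j, N j (f j)) ^ (1 / (d : ℝ)))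
    (hstruct : ∀ f : ∀ j, Y j → ℝ, (∀ j y, 0 ≤ f j y) →
      ∃ S : ∀ j, X → Y j → ℝ,
        (∀ j x y, 0 ≤ S j x y) ∧
        (∀ x (y : ∀ j, Y j), K x y ≤ ∏ j, S j x (y j)) ∧
        (∀ x, (∏ j, ∑ y, S j x y * f j y) ≤
          B ^ d * ∑ y : ∀ j, Y j, K x y * ∏ j, f j (y j)))
    (M : X → ℝ) (hM0 : ∀ x, 0 ≤ M x)
    (hM1 : q = 1 → ∀ x, M x ≤ 1)
    (hMq : 1 < q → (∑ x, μ x * M x ^ (q / (q - 1))) ^ ((q - 1) / q) ≤ 1)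
    (f : ∀ j, Y j → ℝ) (hf : f ∈ Bs N) (ε : ℝ) (hε : 0 < ε) :
    ∃ g ∈ Cs M K d, Lp μ g f ≤ A * B + ε := by
  classical
  have hdne : d ≠ 0 := by omega
  have hdpos : (0:ℝ) < (d:ℝ) := by exact_mod_cast Nat.pos_of_ne_zero hdne
  obtain ⟨hf0, hf1⟩ := hf
  -- the perturbation parameter
  set Sone : ℝ := ∑ j, N j (fun _ => (1:ℝ)) with hSone
  have hSone0 : 0 ≤ Sone := Finset.sum_nonneg fun j _ => hN_nonneg j _
  set η : ℝ := ε / (A * B * Sone + 1) with hη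
  have hηpos : 0 < η := by
    apply div_pos hε
    have : 0 ≤ A * B * Sone := by positivity
    linarith
  set ft : ∀ j, Y j → ℝ := fun j y => f j y + η with hft
  have hft0 : ∀ j y, 0 ≤ ft j y := fun j y => by
    have := hf0 j y; simp only [hft]; linarith
  have hftpos : ∀ j y, 0 < ft j y := fun j y => by
    have := hf0 j y; simp only [hft]; linarith
  obtain ⟨S, hS0, hSK, hSB⟩ := hstruct ft hft0
  -- the "marginal masses"
  set b : Fin d → X → ℝ := fun j x => ∑ y, S j x y * ft j y with hb
  have hb0 : ∀ j x, 0 ≤ b j x := fun j x =>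
    Finset.sum_nonneg fun y _ => mul_nonneg (hS0 j x y) (hft0 j y)
  -- T applied to the perturbed tuple
  set T : X → ℝ := fun x => ∑ y : ∀ j, Y j, K x y * ∏ j, ft j (y j) with hT
  have hT0 : ∀ x, 0 ≤ T x := fun x => Finset.sum_nonneg fun y _ =>
    mul_nonneg (hK x y) (Finset.prod_nonneg fun j _ => hft0 j (y j))
  -- the scaling factors
  set t : Fin d → X → ℝ := fun j x =>
    if M x = 0 then 0 else if (∀ k, 0 < b k x) then
      M x * (∏ k, b k x) ^ (1/(d:ℝ)) / b j x else 0 with ht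
  have ht0 : ∀ j x, 0 ≤ t j x := by
    intro j x
    simp only [ht]
    split
    · exact le_refl 0
    · split
      · refine div_nonneg (mul_nonneg (hM0 x) (Real.rpow_nonneg ?_ _)) (hb0 j x)
        exact Finset.prod_nonneg fun k _ => hb0 k x
      · exact le_refl 0
  refine ⟨fun j x y => t j x * S j x y, ⟨fun j x y => mul_nonneg (ht0 j x) (hS0 j x y), ?_⟩, ?_⟩
  · -- domination
    intro x y
    by_cases hMx : M x = 0
    · rw [hMx, zero_pow hdne, zero_mul]
      exact Finset.prod_nonneg fun j _ => mul_nonneg (ht0 j x) (hS0 j x (y j))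
    by_cases hall : ∀ k, 0 < b k x
    · set Pr : ℝ := (∏ k, b k x) ^ (1/(d:ℝ)) with hPr
      have htj : ∀ j' : Fin d, t j' x = M x * Pr / b j' x := by
        intro j'; simp only [ht]; rw [if_neg hMx, if_pos hall]
      have hPb : (0:ℝ) < ∏ k, b k x := Finset.prod_pos fun k _ => hall k
      have hprod_t : ∏ j' : Fin d, t j' x = M x ^ d := by
        calc ∏ j' : Fin d, t j' x = ∏ j' : Fin d, (M x * Pr / b j' x) :=
              Finset.prod_congr rfl fun j' _ => htj j'
          _ = (∏ _j' : Fin d, (M x * Pr)) / ∏ j' : Fin d, b j' x :=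
              Finset.prod_div_distrib _ _
          _ = (M x * Pr) ^ d / ∏ j' : Fin d, b j' x := by
              rw [Finset.prod_const, Finset.card_univ, Fintype.card_fin]
          _ = M x ^ d * (Pr ^ d) / ∏ j' : Fin d, b j' x := by rw [mul_pow]
          _ = M x ^ d := by
              have : Pr ^ d = ∏ k, b k x := by
                rw [hPr, one_div]
                exact Real.rpow_inv_natCast_pow hPb.le hdne
              rw [this, mul_div_assoc, div_self hPb.ne', mul_one]
      calc M x ^ d * K x y ≤ M x ^ d * ∏ j, S j x (y j) :=
            mul_le_mul_of_nonneg_left (hSK x y) (pow_nonneg (hM0 x) d)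
        _ = (∏ j' : Fin d, t j' x) * ∏ j, S j x (y j) := by rw [hprod_t]
        _ = ∏ j, (t j x * S j x (y j)) := (Finset.prod_mul_distrib).symm
    · -- some marginal vanishes: K x y = 0
      obtain ⟨k, hk⟩ := not_forall.mp hall
      have hbk : b k x = 0 := le_antisymm (not_lt.mp hk) (hb0 k x)
      have hSk : ∀ y', S k x y' = 0 := by
        intro y'
        have hterm := (Finset.sum_eq_zero_iff_of_nonneg
          (fun y' _ => mul_nonneg (hS0 k x y') (hft0 k y'))).mp hbk y' (Finset.mem_univ y')
        rcases mul_eq_zero.mp hterm with h | h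
        · exact h
        · exact absurd h (hftpos k y').ne'
      have hK0 : K x y = 0 := by
        have h1 : ∏ j, S j x (y j) = 0 :=
          Finset.prod_eq_zero (Finset.mem_univ k) (hSk (y k))
        have := hSK x y
        rw [h1] at this
        exact le_antisymm this (hK x y)
      rw [hK0, mul_zero]
      exact Finset.prod_nonneg fun j _ => mul_nonneg (ht0 j x) (hS0 j x (y j))
  · -- cost estimate
    have hcost1 : Lp μ (fun j x y => t j x * S j x y) f ≤ ∑ x, μ x * ∑ j, t j x * b j x := by
      rw [Lp, Finset.sum_comm]
      refine Finset.sum_le_sum fun x _ => ?_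
      rw [Finset.mul_sum]
      refine Finset.sum_le_sum fun j _ => ?_
      refine mul_le_mul_of_nonneg_left ?_ (hμ x)
      calc ∑ y, t j x * S j x y * f j y ≤ ∑ y, t j x * S j x y * ft j y := by
            refine Finset.sum_le_sum fun y _ => ?_
            refine mul_le_mul_of_nonneg_left ?_ (mul_nonneg (ht0 j x) (hS0 j x y))
            simp only [hft]; linarith [hηpos]
        _ = t j x * b j x := by
            rw [hb, Finset.mul_sum]
            exact Finset.sum_congr rfl fun y _ => by ring
    have hpt : ∀ x, ∑ j, t j x * b j x ≤ (d:ℝ) * (M x * (B * T x ^ (1/(d:ℝ)))) := by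
      intro x
      have hrhs0 : 0 ≤ (d:ℝ) * (M x * (B * T x ^ (1/(d:ℝ)))) := by
        have := Real.rpow_nonneg (hT0 x) (1/(d:ℝ))
        have := hM0 x
        positivity
      by_cases hMx : M x = 0
      · have : ∀ j : Fin d, t j x = 0 := fun j => by simp only [ht]; rw [if_pos hMx]
        simp only [this, zero_mul]
        simpa using hrhs0
      by_cases hall : ∀ k, 0 < b k x
      · set Pr : ℝ := (∏ k, b k x) ^ (1/(d:ℝ)) with hPr
        have htj : ∀ j' : Fin d, t j' x = M x * Pr / b j' x := by
          intro j'; simp only [ht]; rw [if_neg hMx, if_pos hall]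
        have heach : ∀ j : Fin d, t j x * b j x = M x * Pr := by
          intro j
          rw [htj j, div_mul_cancel₀ _ (hall j).ne']
        rw [Finset.sum_congr rfl fun j _ => heach j, Finset.sum_const, Finset.card_univ,
          Fintype.card_fin, nsmul_eq_mul]
        have hPrB : Pr ≤ B * T x ^ (1/(d:ℝ)) := by
          have hmono : Pr ≤ (B ^ d * T x) ^ (1/(d:ℝ)) := by
            rw [hPr]
            exact Real.rpow_le_rpow (Finset.prod_nonneg fun k _ => hb0 k x) (hSB x)
              (by positivity)
          calc Pr ≤ (B ^ d * T x) ^ (1/(d:ℝ)) := hmono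
            _ = (B ^ d) ^ (1/(d:ℝ)) * T x ^ (1/(d:ℝ)) :=
                Real.mul_rpow (by positivity) (hT0 x)
            _ = B * T x ^ (1/(d:ℝ)) := by
                rw [one_div, Real.pow_rpow_inv_natCast hB.le hdne]
        refine mul_le_mul_of_nonneg_left ?_ (by positivity)
        exact mul_le_mul_of_nonneg_left hPrB (hM0 x)
      · have : ∀ j : Fin d, t j x = 0 := fun j => by
          simp only [ht]; rw [if_neg hMx, if_neg hall]
        simp only [this, zero_mul]
        simpa using hrhs0
    have hsum2 : ∑ x, μ x * ∑ j, t j x * b j x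
        ≤ (d:ℝ) * B * ∑ x, μ x * (M x * T x ^ (1/(d:ℝ))) := by
      calc ∑ x, μ x * ∑ j, t j x * b j x
          ≤ ∑ x, μ x * ((d:ℝ) * (M x * (B * T x ^ (1/(d:ℝ))))) :=
            Finset.sum_le_sum fun x _ => mul_le_mul_of_nonneg_left (hpt x) (hμ x)
        _ = (d:ℝ) * B * ∑ x, μ x * (M x * T x ^ (1/(d:ℝ))) := by
            rw [Finset.mul_sum]
            exact Finset.sum_congr rfl fun x _ => by ring
    have hhold := holder_mu μ M (fun x => T x ^ (1/(d:ℝ))) q hμ hM0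
      (fun x => Real.rpow_nonneg (hT0 x) _) hq hM1 hMq
    have hhold' : ∑ x, μ x * (M x * T x ^ (1/(d:ℝ)))
        ≤ (∑ x, μ x * T x ^ (q/(d:ℝ))) ^ (1/q) := by
      refine le_trans hhold (le_of_eq ?_)
      congr 1
      refine Finset.sum_congr rfl fun x _ => ?_
      congr 1
      rw [← Real.rpow_mul (hT0 x)]
      congr 1
      ring
    have hmm' : (∑ x, μ x * T x ^ (q/(d:ℝ))) ^ (1/q)
        ≤ A * (∏ j, N j (ft j)) ^ (1/(d:ℝ)) := by
      simpa only [hT] using hmain ft hft0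
    have hAMGM : (∏ j, N j (ft j)) ^ (1/(d:ℝ)) ≤ (1/(d:ℝ)) * ∑ j, N j (ft j) := by
      have hgm := Real.geom_mean_le_arith_mean_weighted Finset.univ
        (fun _ => 1/(d:ℝ)) (fun j => N j (ft j))
        (fun _ _ => by positivity)
        (by
          rw [Finset.sum_const, Finset.card_univ, Fintype.card_fin, nsmul_eq_mul]
          field_simp)
        (fun j _ => hN_nonneg j _)
      calc (∏ j, N j (ft j)) ^ (1/(d:ℝ)) = ∏ j, (N j (ft j)) ^ (1/(d:ℝ)) :=
            (Real.finset_prod_rpow _ _ (fun j _ => hN_nonneg j _) _).symm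
        _ ≤ ∑ j, (1/(d:ℝ)) * N j (ft j) := hgm
        _ = (1/(d:ℝ)) * ∑ j, N j (ft j) := (Finset.mul_sum _ _ _).symm
    have hNft : ∑ j, N j (ft j) ≤ 1 + η * Sone := by
      have heach : ∀ j : Fin d, N j (ft j) ≤ N j (f j) + η * N j (fun _ => (1:ℝ)) := by
        intro j
        have hrepr : ft j = f j + η • (fun _ => (1:ℝ)) := by
          funext y; simp [hft]
        rw [hrepr]
        refine le_trans (hN_add j _ _) ?_
        rw [hN_smul j η (fun _ => (1:ℝ)), abs_of_pos hηpos]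
      calc ∑ j, N j (ft j) ≤ ∑ j, (N j (f j) + η * N j (fun _ => (1:ℝ))) :=
            Finset.sum_le_sum fun j _ => heach j
        _ = ∑ j, N j (f j) + η * Sone := by
            rw [Finset.sum_add_distrib, hSone, Finset.mul_sum]
        _ ≤ 1 + η * Sone := by linarith [hf1]
    have hfinal : (d:ℝ) * B * (A * ((1/(d:ℝ)) * (1 + η * Sone))) ≤ A * B + ε := by
      have he : (d:ℝ) * B * (A * ((1/(d:ℝ)) * (1 + η * Sone))) = A * B * (1 + η * Sone) := by
        field_simp
      rw [he]
      have hc : (0:ℝ) ≤ A * B * Sone := by positivity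
      have hkey : A * B * Sone * η ≤ ε := by
        have h1 : A * B * Sone * η = A * B * Sone * ε / (A * B * Sone + 1) := by
          rw [hη]; ring
        rw [h1, div_le_iff₀ (by linarith : (0:ℝ) < A * B * Sone + 1)]
        nlinarith
      nlinarith [hηpos.le, hSone0]
    calc Lp μ (fun j x y => t j x * S j x y) f
        ≤ ∑ x, μ x * ∑ j, t j x * b j x := hcost1
      _ ≤ (d:ℝ) * B * ∑ x, μ x * (M x * T x ^ (1/(d:ℝ))) := hsum2
      _ ≤ (d:ℝ) * B * (∑ x, μ x * T x ^ (q/(d:ℝ))) ^ (1/q) :=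
          mul_le_mul_of_nonneg_left hhold' (by positivity)
      _ ≤ (d:ℝ) * B * (A * (∏ j, N j (ft j)) ^ (1/(d:ℝ))) :=
          mul_le_mul_of_nonneg_left hmm' (by positivity)
      _ ≤ (d:ℝ) * B * (A * ((1/(d:ℝ)) * (1 + η * Sone))) := by
          refine mul_le_mul_of_nonneg_left (mul_le_mul_of_nonneg_left ?_ hA.le) (by positivity)
          exact le_trans hAMGM (mul_le_mul_of_nonneg_left hNft (by positivity))
      _ ≤ A * B + ε := hfinal


/-- `Lp` evaluated on a tuple supported in a single coordinate. -/
lemma Lp_update (μ : X → ℝ) (g : ∀ j, X → Y j → ℝ) (j : Fin d) (v : Y j → ℝ) :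
    Lp μ g (Function.update (0 : ∀ k, Y k → ℝ) j v)
      = ∑ x, μ x * ∑ y, g j x y * v y := by
  classical
  rw [Lp]
  rw [Finset.sum_eq_single_of_mem j (Finset.mem_univ j)]
  · rw [Function.update_self]
  · intro k _ hkj
    rw [Function.update_of_ne hkj]
    simp

lemma update_mem_Bs (N : ∀ j, (Y j → ℝ) → ℝ)
    (hnn : ∀ j f, 0 ≤ N j f)
    (hsmul : ∀ j (c : ℝ) f, N j (c • f) = |c| * N j f)
    (j : Fin d) (v : Y j → ℝ) (hv0 : ∀ y, 0 ≤ v y) (hv1 : N j v ≤ 1) :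
    Function.update (0 : ∀ k, Y k → ℝ) j v ∈ Bs N := by
  classical
  constructor
  · intro k y
    by_cases hkj : k = j
    · subst hkj; rw [Function.update_self]; exact hv0 y
    · rw [Function.update_of_ne hkj]; simp
  · rw [Finset.sum_eq_single_of_mem j (Finset.mem_univ j)]
    · rw [Function.update_self]; exact hv1
    · intro k _ hkj
      rw [Function.update_of_ne hkj]
      simpa using norm_zero' (N k) (hsmul k)


end MultilinearDualityAux

/- STATEMENT 0: Multilinear duality theorem (finite discrete setting),
   Theorem 1 (`thm:main`) of the paper. -/

open MultilinearDualityAux in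
theorem multilinear_duality
    (d : ℕ) (hd : 1 ≤ d)
    (X : Type*) [Fintype X] (μ : X → ℝ) (hμ : ∀ x, 0 ≤ μ x)
    (Y : Fin d → Type*) [∀ j, Fintype (Y j)]
    -- lattice norms on ℝ^{Y_j}
    (N : ∀ j, (Y j → ℝ) → ℝ)
    (hN_nonneg : ∀ j f, 0 ≤ N j f)
    (hN_add : ∀ j f g, N j (f + g) ≤ N j f + N j g)
    (hN_smul : ∀ j (c : ℝ) f, N j (c • f) = |c| * N j f)
    (hN_defin : ∀ j f, N j f = 0 → f = 0)
    (hN_lattice : ∀ j f g, (∀ y, |f y| ≤ |g y|) → N j f ≤ N j g)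
    -- nonnegative kernel and saturation
    (K : X → (∀ j, Y j) → ℝ) (hK : ∀ x y, 0 ≤ K x y)
    (hsat : ∀ x, 0 < μ x → ∃ y, K x y ≠ 0)
    (q : ℝ) (hq : 1 ≤ q)
    (A B : ℝ) (hA : 0 < A) (hB : 0 < B)
    -- (i) main hypothesis: ‖T(f₁,…,f_d)^{1/d}‖_{L^q(μ)} ≤ A (N₁(f₁)⋯N_d(f_d))^{1/d}
    (hmain : ∀ f : ∀ j, Y j → ℝ, (∀ j y, 0 ≤ f j y) →
      (∑ x, μ x * (∑ y : ∀ j, Y j, K x y * ∏ j, f j (y j)) ^ (q / d)) ^ (1 / q)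
        ≤ A * (∏ j, N j (f j)) ^ (1 / (d : ℝ)))
    -- (ii) auxiliary structural hypothesis
    (hstruct : ∀ f : ∀ j, Y j → ℝ, (∀ j y, 0 ≤ f j y) →
      ∃ S : ∀ j, X → Y j → ℝ,
        (∀ j x y, 0 ≤ S j x y) ∧
        (∀ x (y : ∀ j, Y j), K x y ≤ ∏ j, S j x (y j)) ∧
        (∀ x, (∏ j, ∑ y, S j x y * f j y) ≤
          B ^ d * ∑ y : ∀ j, Y j, K x y * ∏ j, f j (y j)))
    -- M nonnegative with ‖M‖_{ℓ^{q'}(μ)} ≤ 1 (q' the conjugate exponent, max-norm when q = 1)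
    (M : X → ℝ) (hM0 : ∀ x, 0 ≤ M x)
    (hM1 : q = 1 → ∀ x, M x ≤ 1)
    (hMq : 1 < q → (∑ x, μ x * M x ^ (q / (q - 1))) ^ ((q - 1) / q) ≤ 1) :
    ∃ g : ∀ j, X → Y j → ℝ,
      (∀ j x y, 0 ≤ g j x y) ∧
      (∀ x (y : ∀ j, Y j), M x ^ d * K x y ≤ ∏ j, g j x (y j)) ∧
      (∀ j (f : Y j → ℝ), (∀ y, 0 ≤ f y) →
        ∑ x, μ x * ∑ y, g j x y * f y ≤ A * B * N j f) := by
  classical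
  have hdne : d ≠ 0 := by omega
  -- the "big" constant function, needed on the μ-null set
  set Hx : X → ℝ := fun x => 1 + ∑ y : ∀ j, Y j, M x ^ d * K x y with hHx
  have hHx1 : ∀ x, 1 ≤ Hx x := by
    intro x
    have : 0 ≤ ∑ y : ∀ j, Y j, M x ^ d * K x y :=
      Finset.sum_nonneg fun y _ => mul_nonneg (pow_nonneg (hM0 x) d) (hK x y)
    simp only [hHx]; linarith
  have hHx0 : ∀ x, 0 ≤ Hx x := fun x => le_trans zero_le_one (hHx1 x)
  have hHxdom : ∀ x (y : ∀ j, Y j), M x ^ d * K x y ≤ Hx x ^ d := by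
    intro x y
    have h1 : M x ^ d * K x y ≤ Hx x := by
      have h2 : M x ^ d * K x y ≤ ∑ y' : ∀ j, Y j, M x ^ d * K x y' :=
        Finset.single_le_sum (f := fun y' => M x ^ d * K x y')
          (fun y' _ => mul_nonneg (pow_nonneg (hM0 x) d) (hK x y')) (Finset.mem_univ y)
      simp only [hHx]; linarith
    exact le_trans h1 (le_self_pow₀ (hHx1 x) hdne)
  have hHmem : (fun (j : Fin d) (x : X) (_ : Y j) => Hx x) ∈ Cs M K d := by
    constructor
    · intro j x y; exact hHx0 x
    · intro x y
      rw [Finset.prod_const, Finset.card_univ, Fintype.card_fin]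
      exact hHxdom x y
  -- Step 1: for every n, an admissible g with value ≤ AB + 1/(n+1)
  have claimA : ∀ n : ℕ, ∃ g ∈ Cs M K d, ∀ f ∈ Bs N, Lp μ g f ≤ A * B + 1 / ((n:ℝ) + 1) := by
    intro n
    have hn1 : (0:ℝ) < 1 / ((n:ℝ) + 1) := by positivity
    refine minimax μ (Cs M K d) (Bs N) (convex_Cs M K hd hM0 hK) ⟨_, hHmem⟩
      (isCompact_Bs N hN_nonneg hN_add hN_smul hN_defin hN_lattice)
      (convex_Bs N hN_add hN_smul) (A * B + 1 / ((n:ℝ) + 1)) ?_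
    intro f hf
    obtain ⟨g, hg, hgval⟩ := construct_step hd μ hμ N hN_nonneg hN_add hN_smul K hK q hq
      A B hA hB hmain hstruct M hM0 hM1 hMq f hf (1 / (2 * ((n:ℝ) + 1))) (by positivity)
    refine ⟨g, hg, lt_of_le_of_lt hgval ?_⟩
    have : 1 / (2 * ((n:ℝ) + 1)) < 1 / ((n:ℝ) + 1) := by
      rw [div_lt_div_iff₀ (by positivity) (by positivity)]
      nlinarith [Nat.cast_nonneg (α := ℝ) n]
    linarith
  -- the a priori bound on admissible g on the support of μ
  set RB : ∀ j, X → Y j → ℝ := fun j x y =>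
    if μ x = 0 then Hx x else (A * B + 1) * N j (Pi.single y (1:ℝ)) / μ x with hRB
  -- Step 2: decreasing sequence of nonempty compact sets
  set D : ℕ → Set (∀ j, X → Y j → ℝ) := fun n =>
    {g | (g ∈ Cs M K d ∧ ∀ j x y, g j x y ≤ RB j x y) ∧
      ∀ f ∈ Bs N, Lp μ g f ≤ A * B + 1 / ((n:ℝ) + 1)} with hD
  have hDne : ∀ n, (D n).Nonempty := by
    intro n
    obtain ⟨g, hgC, hgval⟩ := claimA n
    set gh : ∀ j, X → Y j → ℝ := fun j x y => if μ x = 0 then Hx x else g j x y with hgh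
    have hLpeq : ∀ f, Lp μ gh f = Lp μ g f := by
      intro f
      refine Finset.sum_congr rfl fun j _ => Finset.sum_congr rfl fun x _ => ?_
      by_cases hx : μ x = 0
      · rw [hx]; ring
      · have : ∀ y, gh j x y = g j x y := fun y => by simp only [hgh]; rw [if_neg hx]
        rw [Finset.sum_congr rfl fun y _ => by rw [this y]]
    refine ⟨gh, ⟨⟨⟨?_, ?_⟩, ?_⟩, ?_⟩⟩
    · intro j x y
      simp only [hgh]
      split
      · exact hHx0 x
      · exact hgC.1 j x y
    · intro x y
      by_cases hx : μ x = 0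
      · have : ∀ j : Fin d, gh j x (y j) = Hx x := fun j => by
          simp only [hgh]; rw [if_pos hx]
        rw [Finset.prod_congr rfl fun j _ => this j, Finset.prod_const, Finset.card_univ,
          Fintype.card_fin]
        exact hHxdom x y
      · have : ∀ j : Fin d, gh j x (y j) = g j x (y j) := fun j => by
          simp only [hgh]; rw [if_neg hx]
        rw [Finset.prod_congr rfl fun j _ => this j]
        exact hgC.2 x y
    · -- the box bound
      intro j x y
      simp only [hgh, hRB]
      by_cases hx : μ x = 0
      · rw [if_pos hx, if_pos hx]
      · rw [if_neg hx, if_neg hx]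
        have hμx : 0 < μ x := lt_of_le_of_ne (hμ x) (Ne.symm hx)
        have hNe : 0 < N j (Pi.single y (1:ℝ)) :=
          single_pos (N j) (hN_nonneg j) (hN_defin j) y
        set v : Y j → ℝ := (N j (Pi.single y (1:ℝ)))⁻¹ • (Pi.single y (1:ℝ) : Y j → ℝ) with hv
        have hv0 : ∀ y', 0 ≤ v y' := by
          intro y'
          simp only [hv, Pi.smul_apply, smul_eq_mul, Pi.single_apply]
          split
          · simp [inv_nonneg, hNe.le]
          · simp
        have hvmem : Function.update (0 : ∀ k, Y k → ℝ) j v ∈ Bs N := by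
          refine update_mem_Bs N hN_nonneg hN_smul j v hv0 ?_
          rw [hv, hN_smul j, abs_of_pos (inv_pos.mpr hNe), inv_mul_cancel₀ hNe.ne']
        have hval := hgval _ hvmem
        rw [Lp_update] at hval
        have hsum : ∑ x', μ x' * ∑ y', g j x' y' * v y'
            = ∑ x', μ x' * (g j x' y * (N j (Pi.single y (1:ℝ)))⁻¹) := by
          refine Finset.sum_congr rfl fun x' _ => ?_
          congr 1
          rw [Finset.sum_eq_single_of_mem y (Finset.mem_univ y)]
          · simp only [hv, Pi.smul_apply, smul_eq_mul, Pi.single_eq_same, mul_one]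
          · intro y' _ hy'
            simp only [hv, Pi.smul_apply, smul_eq_mul, Pi.single_apply, if_neg hy']
            ring
        rw [hsum] at hval
        have hone : μ x * (g j x y * (N j (Pi.single y (1:ℝ)))⁻¹) ≤ A * B + 1 := by
          have hterm : μ x * (g j x y * (N j (Pi.single y (1:ℝ)))⁻¹)
              ≤ ∑ x', μ x' * (g j x' y * (N j (Pi.single y (1:ℝ)))⁻¹) := by
            refine Finset.single_le_sum (f := fun x' =>
              μ x' * (g j x' y * (N j (Pi.single y (1:ℝ)))⁻¹)) (fun x' _ => ?_)
              (Finset.mem_univ x)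
            exact mul_nonneg (hμ x') (mul_nonneg (hgC.1 j x' y) (inv_nonneg.mpr hNe.le))
          have hn1 : 1 / ((n:ℝ) + 1) ≤ 1 := by
            rw [div_le_one (by positivity)]
            linarith [Nat.cast_nonneg (α := ℝ) n]
          linarith
        have h2 : μ x * (g j x y * (N j (Pi.single y (1:ℝ)))⁻¹) * N j (Pi.single y (1:ℝ))
            ≤ (A * B + 1) * N j (Pi.single y (1:ℝ)) :=
          mul_le_mul_of_nonneg_right hone hNe.le
        have h3 : μ x * (g j x y * (N j (Pi.single y (1:ℝ)))⁻¹) * N j (Pi.single y (1:ℝ))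
            = g j x y * μ x := by
          field_simp
        rw [le_div_iff₀ hμx]
        linarith
    · intro f hf
      rw [hLpeq f]
      exact hgval f hf
  have hDclosed : ∀ n, IsClosed (D n) := by
    intro n
    have h1 : IsClosed {g : ∀ j, X → Y j → ℝ | ∀ j x y, g j x y ≤ RB j x y} := by
      have hrw : {g : ∀ j, X → Y j → ℝ | ∀ j x y, g j x y ≤ RB j x y}
          = ⋂ j, ⋂ x, ⋂ y, {g : ∀ j, X → Y j → ℝ | g j x y ≤ RB j x y} := by
        ext g; simp [Set.mem_iInter]
      rw [hrw]
      exact isClosed_iInter fun j => isClosed_iInter fun x => isClosed_iInter fun y =>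
        isClosed_le
          ((continuous_apply y).comp ((continuous_apply x).comp (continuous_apply j)))
          continuous_const
    have h2 : IsClosed {g : ∀ j, X → Y j → ℝ |
        ∀ f ∈ Bs N, Lp μ g f ≤ A * B + 1 / ((n:ℝ) + 1)} := by
      have hrw : {g : ∀ j, X → Y j → ℝ | ∀ f ∈ Bs N, Lp μ g f ≤ A * B + 1 / ((n:ℝ) + 1)}
          = ⋂ f ∈ Bs N, {g : ∀ j, X → Y j → ℝ | Lp μ g f ≤ A * B + 1 / ((n:ℝ) + 1)} := by
        ext g; simp [Set.mem_iInter]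
      rw [hrw]
      exact isClosed_biInter fun f _ => isClosed_le (Lp_cont_g μ f) continuous_const
    have hEq : D n = ((Cs M K d) ∩ {g | ∀ j x y, g j x y ≤ RB j x y})
        ∩ {g | ∀ f ∈ Bs N, Lp μ g f ≤ A * B + 1 / ((n:ℝ) + 1)} := by
      ext g
      simp only [hD, Set.mem_setOf_eq, Set.mem_inter_iff]
    rw [hEq]
    exact ((isClosed_Cs M K d).inter h1).inter h2
  have hBoxCompact : IsCompact (Set.pi Set.univ fun j => Set.pi Set.univ fun x =>
      Set.pi Set.univ fun y => Set.Icc (0:ℝ) (RB j x y)) :=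
    isCompact_univ_pi fun j => isCompact_univ_pi fun x => isCompact_univ_pi fun y =>
      isCompact_Icc
  have hDsub : D 0 ⊆ Set.pi Set.univ fun j => Set.pi Set.univ fun x =>
      Set.pi Set.univ fun y => Set.Icc (0:ℝ) (RB j x y) := by
    intro g hg
    rw [Set.mem_univ_pi]
    intro j
    rw [Set.mem_univ_pi]
    intro x
    rw [Set.mem_univ_pi]
    intro y
    exact ⟨hg.1.1.1 j x y, hg.1.2 j x y⟩
  have hDcompact0 : IsCompact (D 0) :=
    IsCompact.of_isClosed_subset hBoxCompact (hDclosed 0) hDsub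
  have hDdec : ∀ n, D (n + 1) ⊆ D n := by
    intro n g hg
    refine ⟨hg.1, fun f hf => le_trans (hg.2 f hf) ?_⟩
    have hcast : ((n + 1 : ℕ) : ℝ) = (n : ℝ) + 1 := by push_cast; ring
    have hmono : 1 / ((n:ℝ) + 1 + 1) ≤ 1 / ((n:ℝ) + 1) := by
      apply one_div_le_one_div_of_le (by positivity)
      linarith
    rw [hcast]
    linarith
  obtain ⟨gstar, hgstar⟩ :=
    IsCompact.nonempty_iInter_of_sequence_nonempty_isCompact_isClosed D hDdec hDne
      hDcompact0 hDclosed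
  have hgmem : ∀ n : ℕ, gstar ∈ D n := fun n => Set.mem_iInter.mp hgstar n
  have hgC : gstar ∈ Cs M K d := (hgmem 0).1.1
  refine ⟨gstar, hgC.1, hgC.2, ?_⟩
  intro j f hf
  rcases eq_or_lt_of_le (hN_nonneg j f) with h0 | h0
  · -- N j f = 0, hence f = 0
    have hf0 : f = 0 := hN_defin j f h0.symm
    rw [hf0]
    have : N j (0 : Y j → ℝ) = 0 := norm_zero' (N j) (hN_smul j)
    simp [this]
  · have hNf : 0 < N j f := h0
    set v : Y j → ℝ := (N j f)⁻¹ • f with hv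
    have hv0 : ∀ y, 0 ≤ v y := by
      intro y
      simp only [hv, Pi.smul_apply, smul_eq_mul]
      exact mul_nonneg (inv_nonneg.mpr hNf.le) (hf y)
    have hvmem : Function.update (0 : ∀ k, Y k → ℝ) j v ∈ Bs N := by
      refine update_mem_Bs N hN_nonneg hN_smul j v hv0 ?_
      rw [hv, hN_smul j, abs_of_pos (inv_pos.mpr hNf), inv_mul_cancel₀ hNf.ne']
    have hval' : ∀ n : ℕ, ∑ x, μ x * ∑ y, gstar j x y * v y ≤ A * B + 1 / ((n:ℝ) + 1) := by
      intro n
      have := (hgmem n).2 _ hvmem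
      rwa [Lp_update] at this
    have hlim : ∑ x, μ x * ∑ y, gstar j x y * v y ≤ A * B := by
      refine le_of_forall_pos_le_add fun ε hε => ?_
      obtain ⟨n, hn⟩ := exists_nat_one_div_lt hε
      have := hval' n
      linarith
    have hexp : ∑ x, μ x * ∑ y, gstar j x y * v y
        = (N j f)⁻¹ * ∑ x, μ x * ∑ y, gstar j x y * f y := by
      rw [Finset.mul_sum]
      refine Finset.sum_congr rfl fun x _ => ?_
      have hinner : ∑ y, gstar j x y * v y = (N j f)⁻¹ * ∑ y, gstar j x y * f y := by
        rw [Finset.mul_sum]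
        refine Finset.sum_congr rfl fun y _ => ?_
        simp only [hv, Pi.smul_apply, smul_eq_mul]
        ring
      rw [hinner]
      ring
    rw [hexp] at hlim
    have hmul := mul_le_mul_of_nonneg_left hlim hNf.le
    have heq : N j f * ((N j f)⁻¹ * ∑ x, μ x * ∑ y, gstar j x y * f y)
        = ∑ x, μ x * ∑ y, gstar j x y * f y := by
      rw [← mul_assoc, mul_inv_cancel₀ hNf.ne', one_mul]
    rw [heq] at hmul
    calc ∑ x, μ x * ∑ y, gstar j x y * f y ≤ N j f * (A * B) := hmul
      _ = A * B * N j f := by ring
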